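/- Let γ > 0 be a real number and let s be a complex number with Re s > 2. Then ∑_{m,n≥0} (γ + 2m + 3n)^{−s} = 6^{−s}·∑_{j=0}^{2} ∑_{k=0}^{1} ( ∑_{ν≥0} (ν + w_{jk})^{−(s−1)} + (1 − w_{jk})·∑_{ν≥0} (ν + w_{jk})^{−s} ), where w_{jk} = γ/6 + j/3 + k/2. -/

import Mathlib

open Complex

private lemma sigma_fin_ext {ν₁ ν₂ : ℕ} {i₁ : Fin (ν₁+1)} {i₂ : Fin (ν₂+1)}
    (h : ν₁ = ν₂) (h2 : (i₁ : ℕ) = i₂) :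
    (⟨ν₁, i₁⟩ : Σ ν : ℕ, Fin (ν+1)) = ⟨ν₂, i₂⟩ := by
  subst h; simp [Fin.ext_iff, h2]

/-- The key reindexing bijection. -/
private def E : (Fin 3 × Fin 2 × Σ ν : ℕ, Fin (ν+1)) ≃ ℕ × ℕ where
  toFun x := (3 * (x.2.2.1 - (x.2.2.2 : ℕ)) + (x.1 : ℕ), 2 * (x.2.2.2 : ℕ) + (x.2.1 : ℕ))
  invFun p := (⟨p.1 % 3, by omega⟩, ⟨p.2 % 2, by omega⟩,
    ⟨p.1 / 3 + p.2 / 2, ⟨p.2 / 2, by omega⟩⟩)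
  left_inv := by
    rintro ⟨⟨j, hj⟩, ⟨k, hk⟩, ⟨ν, ⟨i, hi⟩⟩⟩
    refine Prod.ext (Fin.ext ?_) (Prod.ext (Fin.ext ?_) (sigma_fin_ext ?_ ?_)) <;>
      simp only [Fin.val_mk] <;> omega
  right_inv := by
    rintro ⟨m, n⟩
    refine Prod.ext ?_ ?_ <;> simp only [Fin.val_mk] <;> omega

private lemma sumReal {c : ℝ} (hc : 0 < c) {r : ℝ} (hr : 1 < r) :
    Summable (fun ν : ℕ => ((ν : ℝ) + c) ^ (-r)) := by
  refine ((Real.summable_one_div_nat_add_rpow c r).mpr hr).congr fun ν => ?_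
  have h : (0:ℝ) < (ν : ℝ) + c := by positivity
  rw [abs_of_pos h, Real.rpow_neg h.le, one_div]

private lemma sumCpx {c : ℝ} (hc : 0 < c) {u : ℂ} (hu : 1 < u.re) :
    Summable (fun ν : ℕ => (((ν : ℝ) + c : ℝ) : ℂ) ^ (-u)) := by
  apply Summable.of_norm
  have key : ∀ ν : ℕ, ‖(((ν : ℝ) + c : ℝ) : ℂ) ^ (-u)‖ = ((ν : ℝ) + c) ^ (-u.re) := by
    intro ν
    rw [Complex.norm_cpow_eq_rpow_re_of_pos (by positivity)]
    simp
  simpa only [key] using sumReal hc hu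

private lemma sumAux {c : ℝ} (hc : 0 < c) {r : ℝ} (hr : 2 < r) :
    Summable (fun ν : ℕ => ((ν : ℝ) + 1) * (c + 6 * ν) ^ (-r)) := by
  set M : ℝ := max 1 (6 / c) with hM
  have hM1 : (1:ℝ) ≤ M := le_max_left _ _
  have hM2 : (1:ℝ) ≤ M * (c / 6) := by
    rw [hM]
    rcases le_total (6 / c) 1 with h | h
    · have : c / 6 ≥ 1 := by
        rw [ge_iff_le, le_div_iff₀ (by norm_num)]
        have := (div_le_one hc).mp h
        linarith
      calc (1:ℝ) ≤ c / 6 := this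
      _ ≤ max 1 (6/c) * (c/6) := le_mul_of_one_le_left (by positivity) (le_max_left _ _)
    · rw [max_eq_right h]
      rw [div_mul_div_comm]
      rw [le_div_iff₀ (by positivity)]
      ring_nf
      nlinarith
  have key : Summable (fun ν : ℕ => (6:ℝ) ^ (-r) * M * ((ν : ℝ) + c / 6) ^ (-(r-1))) :=
    (sumReal (by positivity) (by linarith)).mul_left _
  refine Summable.of_nonneg_of_le (fun ν => by positivity) (fun ν => ?_) key
  have hx : (0:ℝ) < (ν : ℝ) + c / 6 := by positivity
  have h1 : c + 6 * (ν:ℝ) = 6 * ((ν : ℝ) + c / 6) := by ring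
  rw [h1, Real.mul_rpow (by norm_num) hx.le]
  have h2 : ((ν : ℝ) + 1) ≤ M * ((ν : ℝ) + c / 6) := by
    have : M * ((ν : ℝ) + c / 6) = M * ν + M * (c/6) := by ring
    rw [this]
    have : (ν:ℝ) ≤ M * ν := le_mul_of_one_le_left (Nat.cast_nonneg ν) hM1
    linarith
  calc ((ν : ℝ) + 1) * ((6:ℝ) ^ (-r) * ((ν : ℝ) + c / 6) ^ (-r))
      ≤ (M * ((ν : ℝ) + c / 6)) * ((6:ℝ) ^ (-r) * ((ν : ℝ) + c / 6) ^ (-r)) := by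
        apply mul_le_mul_of_nonneg_right h2 (by positivity)
    _ = (6:ℝ) ^ (-r) * M * (((ν : ℝ) + c / 6) ^ (-r) * ((ν : ℝ) + c / 6) ^ (1:ℝ)) := by
        rw [Real.rpow_one]; ring
    _ = (6:ℝ) ^ (-r) * M * ((ν : ℝ) + c / 6) ^ (-(r-1)) := by
        rw [← Real.rpow_add hx]; ring_nf

theorem barnes_two_three_hurwitz_reduction (γ : ℝ) (hγ : 0 < γ) (s : ℂ) (hs : 2 < s.re) :
    ∑' mn : ℕ × ℕ, ((γ : ℂ) + 2 * mn.1 + 3 * mn.2) ^ (-s) =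
      (6 : ℂ) ^ (-s) *
        ∑ j ∈ Finset.range 3, ∑ k ∈ Finset.range 2,
          ((∑' ν : ℕ, ((ν : ℂ) + (γ / 6 + j / 3 + k / 2 : ℝ)) ^ (-(s - 1))) +
            (1 - ((γ / 6 + j / 3 + k / 2 : ℝ) : ℂ)) *
              ∑' ν : ℕ, ((ν : ℂ) + (γ / 6 + j / 3 + k / 2 : ℝ)) ^ (-s)) := by
  have hs1 : 1 < s.re := by linarith
  set f : ℕ × ℕ → ℂ := fun mn => ((γ : ℂ) + 2 * mn.1 + 3 * mn.2) ^ (-s) with hf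
  set G : Fin 3 × Fin 2 × (Σ ν : ℕ, Fin (ν+1)) → ℂ :=
    fun x => ((γ + 2 * (x.1 : ℕ) + 3 * (x.2.1 : ℕ) + 6 * (x.2.2.1 : ℕ) : ℝ) : ℂ) ^ (-s)
    with hG
  -- pointwise : f ∘ E = G
  have hfE : ∀ x, f (E x) = G x := by
    rintro ⟨⟨j, hj⟩, ⟨k, hk⟩, ⟨ν, ⟨i, hi⟩⟩⟩
    simp only [hf, hG, E, Equiv.coe_fn_mk, Fin.val_mk]
    congr 1
    have hnat : 2 * (3 * (ν - i) + j) + 3 * (2 * i + k) = 6 * ν + 2 * j + 3 * k := by omega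
    calc (γ : ℂ) + 2 * ((3 * (ν - i) + j : ℕ) : ℂ) + 3 * ((2 * i + k : ℕ) : ℂ)
        = (γ : ℂ) + ((2 * (3 * (ν - i) + j) + 3 * (2 * i + k) : ℕ) : ℂ) := by
          push_cast; ring
      _ = (γ : ℂ) + ((6 * ν + 2 * j + 3 * k : ℕ) : ℂ) := by rw [hnat]
      _ = ((γ + 2 * (j : ℕ) + 3 * (k : ℕ) + 6 * (ν : ℕ) : ℝ) : ℂ) := by
          push_cast; ring
  -- summability
  have hpos : ∀ (j : Fin 3) (k : Fin 2) (ν : ℕ),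
      (0:ℝ) < γ + 2 * (j : ℕ) + 3 * (k : ℕ) + 6 * ν := by
    intro j k ν; positivity
  have hnorm : ∀ x, ‖G x‖ =
      (γ + 2 * (x.1 : ℕ) + 3 * (x.2.1 : ℕ) + 6 * (x.2.2.1 : ℕ)) ^ (-s.re) := by
    intro x
    rw [hG, Complex.norm_cpow_eq_rpow_re_of_pos (hpos _ _ _)]
    simp
  have HsumN : Summable (fun x : Fin 3 × Fin 2 × (Σ ν : ℕ, Fin (ν+1)) =>
      (γ + 2 * (x.1 : ℕ) + 3 * (x.2.1 : ℕ) + 6 * (x.2.2.1 : ℕ)) ^ (-s.re)) := by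
    rw [summable_prod_of_nonneg (fun x => by positivity)]
    refine ⟨fun j => ?_, Summable.of_finite⟩
    rw [summable_prod_of_nonneg (fun x => by positivity)]
    refine ⟨fun k => ?_, Summable.of_finite⟩
    rw [summable_sigma_of_nonneg (fun x => by positivity)]
    refine ⟨fun ν => Summable.of_finite, ?_⟩
    have he : ∀ ν : ℕ, (∑' _ : Fin (ν+1),
        (γ + 2 * (j : ℕ) + 3 * (k : ℕ) + 6 * (ν : ℕ)) ^ (-s.re))
        = ((ν:ℝ) + 1) * ((γ + 2 * (j : ℕ) + 3 * (k : ℕ)) + 6 * ν) ^ (-s.re) := by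
      intro ν
      rw [tsum_fintype, Finset.sum_const, Finset.card_univ, Fintype.card_fin,
        nsmul_eq_mul]
      push_cast
      ring_nf
    rw [funext he]
    exact sumAux (by positivity) hs
  have Hsum : Summable G := by
    apply Summable.of_norm
    simpa only [hnorm] using HsumN
  -- per (j,k) evaluation
  have hwpos : ∀ (j k : ℕ), (0:ℝ) < γ / 6 + (j:ℝ) / 3 + (k:ℝ) / 2 := by
    intro j k; positivity
  have hbase : ∀ (j k ν : ℕ),
      ((ν : ℂ) + ((γ / 6 + (j:ℝ) / 3 + (k:ℝ) / 2 : ℝ) : ℂ))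
        = (((ν : ℝ) + (γ / 6 + (j:ℝ) / 3 + (k:ℝ) / 2) : ℝ) : ℂ) := by
    intro j k ν; push_cast; ring
  have hA : ∀ (j k : ℕ),
      Summable (fun ν : ℕ => ((ν : ℂ) + ((γ / 6 + (j:ℝ) / 3 + (k:ℝ) / 2 : ℝ) : ℂ)) ^ (-(s-1))) := by
    intro j k
    simp only [hbase]
    exact sumCpx (hwpos j k) (by simp [Complex.sub_re]; linarith)
  have hB : ∀ (j k : ℕ),
      Summable (fun ν : ℕ => ((ν : ℂ) + ((γ / 6 + (j:ℝ) / 3 + (k:ℝ) / 2 : ℝ) : ℂ)) ^ (-s)) := by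
    intro j k
    simp only [hbase]
    exact sumCpx (hwpos j k) hs1
  have key : ∀ (j k ν : ℕ),
      ((ν : ℂ) + 1) * ((γ + 2 * (j:ℕ) + 3 * (k:ℕ) + 6 * (ν:ℕ) : ℝ) : ℂ) ^ (-s)
        = (6 : ℂ) ^ (-s) *
          (((ν : ℂ) + ((γ / 6 + (j:ℝ) / 3 + (k:ℝ) / 2 : ℝ) : ℂ)) ^ (-(s-1)) +
            (1 - ((γ / 6 + (j:ℝ) / 3 + (k:ℝ) / 2 : ℝ) : ℂ)) *
              ((ν : ℂ) + ((γ / 6 + (j:ℝ) / 3 + (k:ℝ) / 2 : ℝ) : ℂ)) ^ (-s)) := by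
    intro j k ν
    set w : ℝ := γ / 6 + (j:ℝ) / 3 + (k:ℝ) / 2 with hw
    set x : ℝ := (ν : ℝ) + w with hx
    have hxpos : 0 < x := by have := hwpos j k; rw [hx, ← hw] at *; positivity
    have hxne : ((x : ℝ) : ℂ) ≠ 0 := Complex.ofReal_ne_zero.mpr hxpos.ne'
    have h6 : (γ + 2 * (j:ℕ) + 3 * (k:ℕ) + 6 * (ν:ℕ) : ℝ) = 6 * x := by
      rw [hx, hw]; push_cast; ring
    have hsplit : ((6 * x : ℝ) : ℂ) ^ (-s) = ((6:ℝ) : ℂ) ^ (-s) * ((x:ℝ) : ℂ) ^ (-s) := by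
      rw [Complex.ofReal_mul]
      exact Complex.mul_cpow_ofReal_nonneg (by norm_num) hxpos.le _
    have hshift : ((x : ℝ) : ℂ) ^ (-(s-1)) = ((x:ℝ) : ℂ) * ((x:ℝ) : ℂ) ^ (-s) := by
      rw [show -(s-1) = 1 + -s by ring, Complex.cpow_add _ _ hxne, Complex.cpow_one]
    rw [h6, hsplit, hbase j k ν, ← hx, hshift]
    have h6' : ((6:ℝ) : ℂ) = (6 : ℂ) := by norm_num
    rw [h6']
    have hxc : ((x : ℝ) : ℂ) = (ν : ℂ) + (w : ℂ) := by rw [hx]; push_cast; ring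
    rw [hxc]
    ring
  -- reindex and conclude
  rw [show (∑' mn : ℕ × ℕ, ((γ : ℂ) + 2 * mn.1 + 3 * mn.2) ^ (-s)) = ∑' x, G x from
    ((Equiv.tsum_eq E f).symm.trans (tsum_congr hfE))]
  rw [Summable.tsum_prod Hsum, tsum_fintype]
  have step2 : ∀ j : Fin 3, (∑' y : Fin 2 × (Σ ν : ℕ, Fin (ν+1)), G (j, y))
      = ∑ k : Fin 2, ∑' σ : Σ ν : ℕ, Fin (ν+1), G (j, k, σ) := by
    intro j
    rw [Summable.tsum_prod (Hsum.prod_factor j), tsum_fintype]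
  have step3 : ∀ (j : Fin 3) (k : Fin 2), (∑' σ : Σ ν : ℕ, Fin (ν+1), G (j, k, σ))
      = ∑' ν : ℕ, ((ν : ℂ) + 1) *
          ((γ + 2 * ((j:ℕ):ℕ) + 3 * ((k:ℕ):ℕ) + 6 * (ν:ℕ) : ℝ) : ℂ) ^ (-s) := by
    intro j k
    rw [Summable.tsum_sigma ((Hsum.prod_factor j).prod_factor k)]
    refine tsum_congr fun ν => ?_
    show (∑' _ : Fin (ν+1),
        ((γ + 2 * ((j:ℕ):ℕ) + 3 * ((k:ℕ):ℕ) + 6 * (ν:ℕ) : ℝ) : ℂ) ^ (-s)) = _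
    rw [tsum_fintype, Finset.sum_const, Finset.card_univ, Fintype.card_fin, nsmul_eq_mul]
    push_cast
    ring_nf
  have step4 : ∀ (j k : ℕ),
      (∑' ν : ℕ, ((ν : ℂ) + 1) * ((γ + 2 * (j:ℕ) + 3 * (k:ℕ) + 6 * (ν:ℕ) : ℝ) : ℂ) ^ (-s))
        = (6 : ℂ) ^ (-s) *
          ((∑' ν : ℕ, ((ν : ℂ) + ((γ / 6 + (j:ℝ) / 3 + (k:ℝ) / 2 : ℝ) : ℂ)) ^ (-(s-1))) +
            (1 - ((γ / 6 + (j:ℝ) / 3 + (k:ℝ) / 2 : ℝ) : ℂ)) *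
              ∑' ν : ℕ, ((ν : ℂ) + ((γ / 6 + (j:ℝ) / 3 + (k:ℝ) / 2 : ℝ) : ℂ)) ^ (-s)) := by
    intro j k
    rw [tsum_congr (fun ν => key j k ν), tsum_mul_left,
      Summable.tsum_add (hA j k) ((hB j k).mul_left _), tsum_mul_left]
  calc (∑ j : Fin 3, ∑' y : Fin 2 × (Σ ν : ℕ, Fin (ν+1)), G (j, y))
      = ∑ j : Fin 3, ∑ k : Fin 2, (6 : ℂ) ^ (-s) *
          ((∑' ν : ℕ, ((ν : ℂ) + ((γ / 6 + ((j:ℕ):ℝ) / 3 + ((k:ℕ):ℝ) / 2 : ℝ) : ℂ)) ^ (-(s-1))) +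
            (1 - ((γ / 6 + ((j:ℕ):ℝ) / 3 + ((k:ℕ):ℝ) / 2 : ℝ) : ℂ)) *
              ∑' ν : ℕ, ((ν : ℂ) + ((γ / 6 + ((j:ℕ):ℝ) / 3 + ((k:ℕ):ℝ) / 2 : ℝ) : ℂ)) ^ (-s)) := by
        refine Finset.sum_congr rfl fun j _ => ?_
        rw [step2 j]
        refine Finset.sum_congr rfl fun k _ => ?_
        rw [step3 j k, step4 (j:ℕ) (k:ℕ)]
    _ = ∑ j ∈ Finset.range 3, ∑ k ∈ Finset.range 2, (6 : ℂ) ^ (-s) *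
          ((∑' ν : ℕ, ((ν : ℂ) + ((γ / 6 + (j:ℝ) / 3 + (k:ℝ) / 2 : ℝ) : ℂ)) ^ (-(s-1))) +
            (1 - ((γ / 6 + (j:ℝ) / 3 + (k:ℝ) / 2 : ℝ) : ℂ)) *
              ∑' ν : ℕ, ((ν : ℂ) + ((γ / 6 + (j:ℝ) / 3 + (k:ℝ) / 2 : ℝ) : ℂ)) ^ (-s)) := by
        rw [← Fin.sum_univ_eq_sum_range]
        refine Finset.sum_congr rfl fun j _ => ?_
        rw [← Fin.sum_univ_eq_sum_range]
    _ = (6 : ℂ) ^ (-s) *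
        ∑ j ∈ Finset.range 3, ∑ k ∈ Finset.range 2,
          ((∑' ν : ℕ, ((ν : ℂ) + (γ / 6 + j / 3 + k / 2 : ℝ)) ^ (-(s - 1))) +
            (1 - ((γ / 6 + j / 3 + k / 2 : ℝ) : ℂ)) *
              ∑' ν : ℕ, ((ν : ℂ) + (γ / 6 + j / 3 + k / 2 : ℝ)) ^ (-s)) := by
        rw [Finset.mul_sum]
        refine Finset.sum_congr rfl fun j _ => ?_
        rw [Finset.mul_sum]
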